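/- For θ₂ > 1/2, the equation t = tanh(2θ₂t) has exactly three real roots: 0, m, and −m, where m > 0. -/

import Mathlib

open Real Set Filter Topology

private lemma tanh_hasDerivAt (x : ℝ) :
    HasDerivAt Real.tanh (1 / Real.cosh x ^ 2) x := by
  have ht : Real.tanh = fun y => Real.sinh y / Real.cosh y :=
    funext fun y => Real.tanh_eq_sinh_div_cosh y
  rw [ht]
  have := (Real.hasDerivAt_sinh x).div (Real.hasDerivAt_cosh x) (Real.cosh_pos x).ne'
  refine this.congr_deriv ?_
  rw [← Real.cosh_sq_sub_sinh_sq x]; ring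

private lemma tanh_lt_one (x : ℝ) : Real.tanh x < 1 := by
  rw [Real.tanh_eq_sinh_div_cosh, div_lt_one (Real.cosh_pos x)]
  nlinarith [Real.cosh_sub_sinh x, Real.exp_pos (-x)]

theorem two_star_three_roots_supercritical (θ₂ : ℝ) (h : 1/2 < θ₂) :
    ∃ m : ℝ, 0 < m ∧ {t : ℝ | t = Real.tanh (2 * θ₂ * t)} = {0, m, -m} := by
  set c : ℝ := 2 * θ₂ with hcdef
  have hc : 1 < c := by simp [hcdef]; linarith
  set f : ℝ → ℝ := fun t => Real.tanh (c * t) - t with hfdef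
  have hderiv : ∀ t : ℝ, HasDerivAt f (c / Real.cosh (c * t) ^ 2 - 1) t := by
    intro t
    have h1 : HasDerivAt (fun t : ℝ => c * t) c t := by
      simpa using (hasDerivAt_id t).const_mul c
    have h2 := (tanh_hasDerivAt (c * t)).comp t h1
    have := h2.sub (hasDerivAt_id t)
    refine this.congr_deriv ?_
    ring
  have hcont : Continuous f := by
    have : Differentiable ℝ f := fun t => (hderiv t).differentiableAt
    exact this.continuous
  have hderiv' : ∀ t : ℝ, deriv f t = c / Real.cosh (c * t) ^ 2 - 1 :=
    fun t => (hderiv t).deriv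
  -- deriv f is strictly antitone on (0, ∞)
  have hanti : StrictAntiOn (deriv f) (Ioi 0) := by
    intro x hx y hy hxy
    rw [hderiv' x, hderiv' y]
    have hx0 : (0:ℝ) < x := hx
    have hcosh : Real.cosh (c * x) < Real.cosh (c * y) := by
      rw [Real.cosh_lt_cosh]
      have hcp : (0:ℝ) < c := by linarith
      rw [abs_of_pos (by nlinarith), abs_of_pos (by nlinarith [hx0.trans hxy])]
      exact mul_lt_mul_of_pos_left hxy hcp
    have hA : (0:ℝ) < Real.cosh (c * x) := Real.cosh_pos _
    have hsq : Real.cosh (c * x) ^ 2 < Real.cosh (c * y) ^ 2 := by nlinarith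
    have : c / Real.cosh (c * y) ^ 2 < c / Real.cosh (c * x) ^ 2 :=
      div_lt_div_of_pos_left (by linarith) (by positivity) hsq
    linarith
  have hf0 : f 0 = 0 := by simp [hfdef]
  -- uniqueness of positive zeros
  have huniq : ∀ a b : ℝ, 0 < a → a < b → f a = 0 → f b = 0 → False := by
    intro a b ha hab hfa hfb
    obtain ⟨ξ₁, hξ₁, hd₁⟩ := exists_deriv_eq_zero ha (hcont.continuousOn)
      (by rw [hf0, hfa])
    obtain ⟨ξ₂, hξ₂, hd₂⟩ := exists_deriv_eq_zero hab (hcont.continuousOn)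
      (by rw [hfa, hfb])
    have h1 : ξ₁ ∈ Ioi (0:ℝ) := hξ₁.1
    have h2 : ξ₂ ∈ Ioi (0:ℝ) := lt_trans (lt_trans hξ₁.1 hξ₁.2) hξ₂.1
    have := hanti h1 h2 (lt_trans hξ₁.2 hξ₂.1)
    rw [hd₁, hd₂] at this
    exact lt_irrefl 0 this
  -- existence of a small t₀ with f t₀ > 0
  have hd0 : HasDerivAt f (c - 1) 0 := by
    have := hderiv 0
    simpa using this
  have hslope : Tendsto (slope f 0) (𝓝[≠] 0) (𝓝 (c - 1)) :=
    hasDerivAt_iff_tendsto_slope.1 hd0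
  have hev : ∀ᶠ t in 𝓝[>] (0:ℝ), (0 < slope f 0 t ∧ t < 1) ∧ 0 < t := by
    have h1 : ∀ᶠ t in 𝓝[≠] (0:ℝ), 0 < slope f 0 t :=
      hslope.eventually (eventually_gt_nhds (by linarith))
    have h2 : ∀ᶠ t in 𝓝[>] (0:ℝ), 0 < slope f 0 t :=
      h1.filter_mono (nhdsWithin_mono 0 fun x hx => ne_of_gt hx)
    have h3 : ∀ᶠ t in 𝓝[>] (0:ℝ), t < 1 :=
      eventually_nhdsWithin_of_eventually_nhds (eventually_lt_nhds one_pos)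
    have h4 : ∀ᶠ t in 𝓝[>] (0:ℝ), 0 < t := eventually_mem_nhdsWithin
    exact (h2.and h3).and h4
  obtain ⟨t₀, ⟨hslope₀, ht₀lt1⟩, ht₀pos⟩ := hev.exists
  have hft₀ : 0 < f t₀ := by
    have : slope f 0 t₀ = f t₀ / t₀ := by
      simp [slope_def_field, hf0]
    rw [this] at hslope₀
    exact (div_pos_iff.1 hslope₀).resolve_right (fun ⟨_, h⟩ => absurd ht₀pos (not_lt.2 h.le)) |>.1
  have hf1 : f 1 < 0 := by
    have := _root_.tanh_lt_one c
    simp only [hfdef, mul_one]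
    linarith
  -- IVT to get the positive root m
  obtain ⟨m, hmmem, hfm⟩ : ∃ m ∈ Icc t₀ 1, f m = 0 := by
    have hsub := intermediate_value_Icc' (le_of_lt ht₀lt1) (hcont.continuousOn (s := Icc t₀ 1))
    have : (0:ℝ) ∈ Icc (f 1) (f t₀) := ⟨le_of_lt hf1, le_of_lt hft₀⟩
    obtain ⟨m, hm, hm0⟩ := hsub this
    exact ⟨m, hm, hm0⟩
  have hmpos : 0 < m := lt_of_lt_of_le ht₀pos hmmem.1
  have key : ∀ a : ℝ, 0 < a → f a = 0 → a = m := by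
    intro a ha hfa
    rcases lt_trichotomy a m with hlt | heq | hgt
    · exact (huniq a m ha hlt hfa hfm).elim
    · exact heq
    · exact (huniq m a hmpos hgt hfm hfa).elim
  refine ⟨m, hmpos, ?_⟩
  ext t
  simp only [mem_setOf_eq, mem_insert_iff, mem_singleton_iff]
  constructor
  · intro ht
    have hft : f t = 0 := by simp [hfdef, ← ht]
    rcases lt_trichotomy t 0 with hneg | hzero | hpos
    · right; right
      have hfneg : f (-t) = 0 := by
        simp only [hfdef] at hft ⊢
        rw [mul_neg, Real.tanh_neg]
        linarith
      have := key (-t) (by linarith) hfneg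
      linarith
    · exact Or.inl hzero
    · exact Or.inr (Or.inl (key t hpos hft))
  · rintro (rfl | rfl | rfl)
    · simp
    · simp only [hfdef] at hfm; linarith
    · have : f (-m) = 0 := by
        simp only [hfdef]
        rw [mul_neg, Real.tanh_neg]
        simp only [hfdef] at hfm
        linarith
      simp only [hfdef] at this
      linarith
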